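/- For every a > 0 there exists α > 0 such that -2G(U(α)) = a, where U(α) > 0 is defined by ψ_α(U(α)) = -π/2 for the solution ψ_α of ψ' = -√(α² + cos²ψ), ψ(0)=0, and G solves G' = 1/(ψ_α' - α), G(0)=0. Moreover α → ∞ as a → 0⁺. -/

import Mathlib

open Real

namespace Stmt4Aux

/-- The integrand of the width integral after the change of variables `θ = ψ(u)`. -/
noncomputable def f (α t : ℝ) : ℝ :=
  1 / (Real.sqrt (α ^ 2 + Real.cos t ^ 2) * (Real.sqrt (α ^ 2 + Real.cos t ^ 2) + α))

/-- The width of the helicoid as a function of `α`. -/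
noncomputable def W (α : ℝ) : ℝ := 2 * ∫ t in (-(π / 2))..0, f α t

lemma sqrt_lb {α : ℝ} (hα : 0 < α) (t : ℝ) :
    α ≤ Real.sqrt (α ^ 2 + Real.cos t ^ 2) := by
  have h : α ^ 2 ≤ α ^ 2 + Real.cos t ^ 2 := le_add_of_nonneg_right (sq_nonneg _)
  calc α = Real.sqrt (α ^ 2) := by rw [Real.sqrt_sq hα.le]
  _ ≤ _ := Real.sqrt_le_sqrt h

lemma denom_pos {α : ℝ} (hα : 0 < α) (t : ℝ) :
    0 < Real.sqrt (α ^ 2 + Real.cos t ^ 2) * (Real.sqrt (α ^ 2 + Real.cos t ^ 2) + α) := by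
  have h := sqrt_lb hα t
  nlinarith

lemma f_pos {α : ℝ} (hα : 0 < α) (t : ℝ) : 0 < f α t :=
  div_pos one_pos (denom_pos hα t)

lemma f_cont {α : ℝ} (hα : 0 < α) : Continuous (f α) := by
  apply Continuous.div continuous_const
  · fun_prop
  · intro t; exact (denom_pos hα t).ne'

lemma f_anti {α β t : ℝ} (hα : 0 < α) (hαβ : α ≤ β) : f β t ≤ f α t := by
  have h1 : Real.sqrt (α ^ 2 + Real.cos t ^ 2) ≤ Real.sqrt (β ^ 2 + Real.cos t ^ 2) :=
    Real.sqrt_le_sqrt (by nlinarith)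
  have h2 := sqrt_lb hα t
  have hβ : 0 < β := hα.trans_le hαβ
  apply one_div_le_one_div_of_le (denom_pos hα t)
  nlinarith

lemma W_anti {α β : ℝ} (hα : 0 < α) (hαβ : α ≤ β) : W β ≤ W α := by
  have hβ : 0 < β := hα.trans_le hαβ
  have h : ∫ t in (-(π / 2))..0, f β t ≤ ∫ t in (-(π / 2))..0, f α t := by
    apply intervalIntegral.integral_mono_on (by linarith [Real.pi_pos])
      ((f_cont hβ).intervalIntegrable _ _) ((f_cont hα).intervalIntegrable _ _)
    intro t _; exact f_anti hα hαβ
  unfold W; linarith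

/-- Lower bound: `W α ≥ arctan (π/(2α)) / α`. -/
lemma W_lb {α : ℝ} (hα : 0 < α) : Real.arctan (π / (2 * α)) / α ≤ W α := by
  -- pointwise bound f α t ≥ (1/2) / (α² + (t + π/2)²)
  have hpt : ∀ t ∈ Set.Icc (-(π / 2)) (0 : ℝ),
      (1 / 2) / (α ^ 2 + (t + π / 2) ^ 2) ≤ f α t := by
    intro t _
    have hcos : Real.cos t ^ 2 ≤ (t + π / 2) ^ 2 := by
      have h1 : Real.cos t = Real.sin (t + π / 2) := (Real.sin_add_pi_div_two t).symm
      have h2 : |Real.sin (t + π / 2)| ≤ |t + π / 2| := Real.abs_sin_le_abs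
      rw [h1]
      calc Real.sin (t + π / 2) ^ 2 = |Real.sin (t + π / 2)| ^ 2 := (sq_abs _).symm
      _ ≤ |t + π / 2| ^ 2 := by apply pow_le_pow_left₀ (abs_nonneg _) h2
      _ = (t + π / 2) ^ 2 := sq_abs _
    have hs := sqrt_lb hα t
    have hsq : Real.sqrt (α ^ 2 + Real.cos t ^ 2) ^ 2 = α ^ 2 + Real.cos t ^ 2 :=
      Real.sq_sqrt (by positivity)
    have hd1 : Real.sqrt (α ^ 2 + Real.cos t ^ 2) * (Real.sqrt (α ^ 2 + Real.cos t ^ 2) + α)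
        ≤ 2 * (α ^ 2 + (t + π / 2) ^ 2) := by nlinarith
    have hd0 := denom_pos hα t
    unfold f
    rw [div_le_div_iff₀ (by positivity) hd0]
    nlinarith
  -- integral of the lower bound via arctan antiderivative
  have hF : ∀ t : ℝ, HasDerivAt (fun u => (1 / (2 * α)) * Real.arctan ((u + π / 2) / α))
      ((1 / 2) / (α ^ 2 + (t + π / 2) ^ 2)) t := by
    intro t
    have h1 : HasDerivAt (fun u : ℝ => (u + π / 2) / α) (1 / α) t := by
      simpa using ((hasDerivAt_id t).add_const (π / 2)).div_const α
    have h2 := (Real.hasDerivAt_arctan ((t + π / 2) / α)).comp t h1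
    have h3 := h2.const_mul (1 / (2 * α))
    refine HasDerivAt.congr_deriv h3 ?_
    field_simp
  have hint : ∫ t in (-(π / 2))..0, (1 / 2) / (α ^ 2 + (t + π / 2) ^ 2)
      = (1 / (2 * α)) * Real.arctan (π / (2 * α)) := by
    rw [intervalIntegral.integral_eq_sub_of_hasDerivAt (fun t _ => hF t)]
    · have e1 : ((0 : ℝ) + π / 2) / α = π / (2 * α) := by ring
      have e2 : (-(π / 2) + π / 2) / α = 0 := by ring
      rw [e1, e2, Real.arctan_zero]
      ring
    · apply Continuous.intervalIntegrable
      apply Continuous.div continuous_const (by fun_prop)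
      intro t; positivity
  have hmono : ∫ t in (-(π / 2))..0, (1 / 2) / (α ^ 2 + (t + π / 2) ^ 2)
      ≤ ∫ t in (-(π / 2))..0, f α t := by
    apply intervalIntegral.integral_mono_on (by linarith [Real.pi_pos])
    · apply Continuous.intervalIntegrable
      apply Continuous.div continuous_const (by fun_prop)
      intro t; positivity
    · exact (f_cont hα).intervalIntegrable _ _
    · exact hpt
  unfold W
  rw [hint] at hmono
  have e : Real.arctan (π / (2 * α)) / α = 2 * (1 / (2 * α) * Real.arctan (π / (2 * α))) := by
    field_simp
  rw [e]
  linarith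

lemma W_pos {α : ℝ} (hα : 0 < α) : 0 < W α := by
  have h := W_lb hα
  have : 0 < Real.arctan (π / (2 * α)) / α := by
    apply div_pos _ hα
    rw [← Real.arctan_zero]
    apply Real.arctan_strictMono
    positivity
  linarith

/-- Upper bound: `W α ≤ π / (2 α²)`. -/
lemma W_ub {α : ℝ} (hα : 0 < α) : W α ≤ π / (2 * α ^ 2) := by
  have h : ∫ t in (-(π / 2))..0, f α t ≤ ∫ t in (-(π / 2))..0, 1 / (2 * α ^ 2) := by
    apply intervalIntegral.integral_mono_on (by linarith [Real.pi_pos])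
      ((f_cont hα).intervalIntegrable _ _) (intervalIntegrable_const)
    intro t _
    unfold f
    apply one_div_le_one_div_of_le (by positivity)
    have hs := sqrt_lb hα t
    nlinarith
  have h2 : ∫ t in (-(π / 2))..0, (1 : ℝ) / (2 * α ^ 2) = (π / 2) * (1 / (2 * α ^ 2)) := by
    simp [mul_comm]
    ring
  rw [h2] at h
  unfold W
  have e : π / (2 * α ^ 2) = 2 * (π / 2 * (1 / (2 * α ^ 2))) := by ring
  rw [e]
  linarith

lemma W_contOn : ContinuousOn W (Set.Ioi (0 : ℝ)) := by
  rw [continuousOn_iff_continuous_restrict]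
  unfold W
  apply Continuous.mul continuous_const
  apply intervalIntegral.continuous_parametric_intervalIntegral_of_continuous'
  apply Continuous.div continuous_const
  · fun_prop
  · rintro ⟨⟨α, hα⟩, t⟩
    exact (denom_pos hα t).ne'

lemma exists_sol {a : ℝ} (ha : 0 < a) : ∃ α : ℝ, 0 < α ∧ W α = a := by
  -- choose α₁ small with W α₁ ≥ a and α₂ large with W α₂ ≤ a
  obtain ⟨α₁, hα₁0, hα₁⟩ : ∃ α₁ : ℝ, 0 < α₁ ∧ a ≤ W α₁ := by
    refine ⟨min 1 (π / (4 * a)), lt_min one_pos (by positivity), ?_⟩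
    set α₁ := min 1 (π / (4 * a)) with hdef
    have hα₁0 : 0 < α₁ := lt_min one_pos (by positivity)
    have h1 : α₁ ≤ 1 := min_le_left _ _
    have h2 : α₁ ≤ π / (4 * a) := min_le_right _ _
    have harg : (1 : ℝ) ≤ π / (2 * α₁) := by
      rw [le_div_iff₀ (by positivity)]
      have := Real.pi_gt_three
      nlinarith
    have harct : π / 4 ≤ Real.arctan (π / (2 * α₁)) := by
      rw [← Real.arctan_one]
      exact Real.arctan_strictMono.monotone harg
    have hlb := W_lb hα₁0
    have : a ≤ (π / 4) / α₁ := by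
      rw [le_div_iff₀ hα₁0]
      calc a * α₁ ≤ a * (π / (4 * a)) := by
            apply mul_le_mul_of_nonneg_left h2 ha.le
      _ = π / 4 := by field_simp
    calc a ≤ (π / 4) / α₁ := this
    _ ≤ Real.arctan (π / (2 * α₁)) / α₁ := by gcongr
    _ ≤ W α₁ := hlb
  obtain ⟨α₂, hα₂1, hα₂⟩ : ∃ α₂ : ℝ, α₁ ≤ α₂ ∧ W α₂ ≤ a := by
    refine ⟨max α₁ (Real.sqrt (π / (2 * a))), le_max_left _ _, ?_⟩
    set α₂ := max α₁ (Real.sqrt (π / (2 * a)))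
    have hα₂0 : 0 < α₂ := lt_of_lt_of_le hα₁0 (le_max_left _ _)
    have h2 : Real.sqrt (π / (2 * a)) ≤ α₂ := le_max_right _ _
    have hsq : π / (2 * a) ≤ α₂ ^ 2 := by
      calc π / (2 * a) = Real.sqrt (π / (2 * a)) ^ 2 := (Real.sq_sqrt (by positivity)).symm
      _ ≤ α₂ ^ 2 := by apply pow_le_pow_left₀ (Real.sqrt_nonneg _) h2
    have := W_ub hα₂0
    calc W α₂ ≤ π / (2 * α₂ ^ 2) := this
    _ ≤ a := by
        rw [div_le_iff₀ (by positivity)]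
        rw [div_le_iff₀ (by positivity)] at hsq
        nlinarith
  have hIVT : a ∈ W '' Set.Icc α₁ α₂ := by
    apply intermediate_value_Icc' hα₂1 (W_contOn.mono ?_)
    · exact ⟨hα₂, hα₁⟩
    · intro x hx
      exact lt_of_lt_of_le hα₁0 hx.1
  obtain ⟨α, hαmem, hαW⟩ := hIVT
  exact ⟨α, lt_of_lt_of_le hα₁0 hαmem.1, hαW⟩

noncomputable def A (a : ℝ) : ℝ :=
  if h : 0 < a then Classical.choose (exists_sol h) else 1

lemma A_pos {a : ℝ} (ha : 0 < a) : 0 < A a := by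
  rw [A, dif_pos ha]; exact (Classical.choose_spec (exists_sol ha)).1

lemma A_sol {a : ℝ} (ha : 0 < a) : W (A a) = a := by
  rw [A, dif_pos ha]; exact (Classical.choose_spec (exists_sol ha)).2

/-- The key computation: the hypotheses force `-2 * G U = W α`. -/
lemma width_eq {α : ℝ} (hα : 0 < α) (ψ G : ℝ → ℝ) (U : ℝ)
    (hψ : ∀ u, HasDerivAt ψ (-Real.sqrt (α ^ 2 + Real.cos (ψ u) ^ 2)) u) (hψ0 : ψ 0 = 0)
    (hU : ψ U = -(π / 2))
    (hG : ∀ u, HasDerivAt G (1 / (-Real.sqrt (α ^ 2 + Real.cos (ψ u) ^ 2) - α)) u)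
    (hG0 : G 0 = 0) : -2 * G U = W α := by
  set Φ : ℝ → ℝ := fun θ => ∫ t in (0 : ℝ)..θ, f α t with hΦdef
  have hΦ : ∀ θ, HasDerivAt Φ (f α θ) θ := by
    intro θ
    exact intervalIntegral.integral_hasDerivAt_right
      ((f_cont hα).intervalIntegrable _ _)
      ((f_cont hα).aestronglyMeasurable.stronglyMeasurableAtFilter)
      (f_cont hα).continuousAt
  -- G = Φ ∘ ψ
  have hK : ∀ u, HasDerivAt (fun u => Φ (ψ u))
      (1 / (-Real.sqrt (α ^ 2 + Real.cos (ψ u) ^ 2) - α)) u := by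
    intro u
    have h := (hΦ (ψ u)).comp u (hψ u)
    refine HasDerivAt.congr_deriv h ?_
    set s := Real.sqrt (α ^ 2 + Real.cos (ψ u) ^ 2) with hs
    have hs0 : α ≤ s := sqrt_lb hα _
    have hspos : 0 < s := lt_of_lt_of_le hα hs0
    unfold f
    rw [← hs]
    have hne : s + α ≠ 0 := by positivity
    have hne2 : -s - α ≠ 0 := fun h => hne (by linarith)
    field_simp [hne2]
    ring
  have hconst : ∀ x y : ℝ, G x - Φ (ψ x) = G y - Φ (ψ y) := by
    apply is_const_of_deriv_eq_zero
    · intro u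
      exact ((hG u).sub (hK u)).differentiableAt
    · intro u
      have := ((hG u).sub (hK u))
      rw [sub_self] at this
      exact this.deriv
  have h0 : G 0 - Φ (ψ 0) = 0 := by
    rw [hG0, hψ0]
    simp [hΦdef]
  have hU' : G U = Φ (-(π / 2)) := by
    have := hconst U 0
    rw [h0, hU] at this
    linarith
  have hsymm : Φ (-(π / 2)) = -∫ t in (-(π / 2))..0, f α t := by
    rw [hΦdef]
    exact intervalIntegral.integral_symm _ _
  rw [hU', hsymm, W]
  ring

lemma A_tendsto : Filter.Tendsto A (nhdsWithin 0 (Set.Ioi 0)) Filter.atTop := by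
  rw [Filter.tendsto_atTop]
  intro M
  set β : ℝ := max M 1 with hβdef
  have hβ : 0 < β := lt_of_lt_of_le one_pos (le_max_right _ _)
  have hδ : 0 < W β := W_pos hβ
  have hmem : Set.Ioo (0 : ℝ) (W β) ∈ nhdsWithin (0 : ℝ) (Set.Ioi 0) :=
    Ioo_mem_nhdsGT_of_mem ⟨le_refl _, hδ⟩
  filter_upwards [hmem] with a ha
  have ha0 : 0 < a := ha.1
  have haW : a < W β := ha.2
  have hsol := A_sol ha0
  by_contra hcon
  push_neg at hcon
  have hAβ : A a ≤ β := le_trans hcon.le (le_max_left _ _)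
  have := W_anti (A_pos ha0) hAβ
  rw [hsol] at this
  linarith

end Stmt4Aux

/-- For every `a > 0` there is `α = A a > 0` such that the width `-2 G(U(α))` of the
Daniel–Hauswirth helicoid equals `a`, where `ψ` solves `ψ' = -√(α² + cos²ψ)`, `ψ(0)=0`,
`U > 0` satisfies `ψ(U) = -π/2`, and `G` solves `G' = 1/(ψ' - α)`, `G(0)=0`.
Moreover `α → ∞` as `a → 0⁺`. -/
theorem stmt_4 :
    ∃ A : ℝ → ℝ,
      (∀ a : ℝ, 0 < a → 0 < A a ∧
        ∀ (ψ G : ℝ → ℝ) (U : ℝ),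
          (∀ u, HasDerivAt ψ (-Real.sqrt ((A a)^2 + Real.cos (ψ u) ^ 2)) u) → ψ 0 = 0 →
          0 < U → ψ U = -(π/2) →
          (∀ u, HasDerivAt G (1 / (-Real.sqrt ((A a)^2 + Real.cos (ψ u) ^ 2) - A a)) u) →
          G 0 = 0 →
          -2 * G U = a) ∧
      Filter.Tendsto A (nhdsWithin 0 (Set.Ioi 0)) Filter.atTop := by
  refine ⟨Stmt4Aux.A, fun a ha => ⟨Stmt4Aux.A_pos ha, ?_⟩, Stmt4Aux.A_tendsto⟩
  intro ψ G U hψ hψ0 _ hU hG hG0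
  rw [Stmt4Aux.width_eq (Stmt4Aux.A_pos ha) ψ G U hψ hψ0 hU hG hG0]
  exact Stmt4Aux.A_sol ha
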